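/- Let G be a connected undirected weighted graph on {1,…,N} with symmetric nonnegative weights a_{ij} = a_{ji} ≥ 0, and let wrap : ℝ → (−π, π] denote reduction modulo 2π. Suppose θ_1,…,θ_N : [0,∞) → ℝ are differentiable and satisfy the coupled oscillator dynamics θ̇_i(t) = Σ_{j : a_{ij} > 0} a_{ij} · wrap(θ_j(t) − θ_i(t)). If there exists γ ∈ ℝ such that θ_i(0) ∈ (γ, γ + π) for every i (i.e., all initial phases lie in an open semicircle), then the interval [min_j θ_j(0), max_j θ_j(0)] is positively invariant (θ_i(t) remains in it for all t ≥ 0 and all i), and the phases synchronize exponentially: there exist c > 0 and λ > 0 such that max_{i,j} |θ_i(t) − θ_j(t)| ≤ c e^{−λ t} for all t ≥ 0. -/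

import Mathlib

open Real Set Filter Topology

/-- `wrap x` is the unique representative of `x` modulo `2π` lying in `(−π, π]`. -/
noncomputable def wrap (x : ℝ) : ℝ :=
  x - 2 * π * (⌈(x - π) / (2 * π)⌉ : ℤ)

lemma wrap_eq_self {x : ℝ} (h1 : -π < x) (h2 : x ≤ π) : wrap x = x := by
  have hπ : (0:ℝ) < π := Real.pi_pos
  have hceil : ⌈(x - π) / (2 * π)⌉ = 0 := by
    rw [Int.ceil_eq_zero_iff]
    constructor
    · rw [lt_div_iff₀ (by positivity : (0:ℝ) < 2*π)]
      linarith
    · apply div_nonpos_of_nonpos_of_nonneg <;> [linarith; positivity]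
  rw [wrap, hceil]
  simp

lemma path_bound {N : ℕ} (a : Fin N → Fin N → ℝ) {u v : Fin N}
    (h : Relation.ReflTransGen (fun i j => 0 < a i j) u v) :
    ∃ n : ℕ, ∀ (x : Fin N → ℝ) (s : ℝ), 0 ≤ s →
      (∀ i j, 0 < a i j → |x i - x j| ≤ s) → |x u - x v| ≤ n * s := by
  induction h with
  | refl => exact ⟨0, fun x s hs _ => by simp⟩
  | @tail w v hpath hedge ih =>
      obtain ⟨n, hn⟩ := ih
      refine ⟨n + 1, fun x s hs hstep => ?_⟩
      have h1 : |x u - x w| ≤ n * s := hn x s hs hstep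
      have h2 : |x w - x v| ≤ s := hstep w v hedge
      calc |x u - x v| ≤ |x u - x w| + |x w - x v| := abs_sub_le _ _ _
        _ ≤ n * s + s := add_le_add h1 h2
        _ = (↑(n+1)) * s := by push_cast; ring

lemma sum_d_zero {N : ℕ} (a : Fin N → Fin N → ℝ) (ha_symm : ∀ i j, a i j = a j i)
    (x : Fin N → ℝ) :
    ∑ u, ∑ j, a u j * (x j - x u) = 0 := by
  have hswap : ∑ u, ∑ j, a u j * (x j - x u) = ∑ u, ∑ j, a u j * (x u - x j) := by
    rw [Finset.sum_comm]
    exact Finset.sum_congr rfl fun u _ => Finset.sum_congr rfl fun j _ => by rw [ha_symm]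
  have : (2:ℝ) * (∑ u, ∑ j, a u j * (x j - x u)) = 0 := by
    rw [two_mul]
    nth_rewrite 2 [hswap]
    rw [← Finset.sum_add_distrib]
    rw [show (0:ℝ) = ∑ u : Fin N, (0:ℝ) by simp]
    refine Finset.sum_congr rfl fun u _ => ?_
    rw [← Finset.sum_add_distrib]
    rw [show (0:ℝ) = ∑ j : Fin N, (0:ℝ) by simp]
    exact Finset.sum_congr rfl fun j _ => by ring
  linarith

lemma sum_xd {N : ℕ} (a : Fin N → Fin N → ℝ) (ha_symm : ∀ i j, a i j = a j i)
    (x : Fin N → ℝ) :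
    2 * (∑ u, x u * ∑ j, a u j * (x j - x u)) = -(∑ u, ∑ j, a u j * (x u - x j)^2) := by
  have hswap : ∑ u, ∑ j, a u j * (x u * (x j - x u))
      = ∑ u, ∑ j, a u j * (x j * (x u - x j)) := by
    rw [Finset.sum_comm]
    exact Finset.sum_congr rfl fun u _ => Finset.sum_congr rfl fun j _ => by rw [ha_symm]
  have h1 : ∀ u, x u * ∑ j, a u j * (x j - x u) = ∑ j, a u j * (x u * (x j - x u)) := by
    intro u; rw [Finset.mul_sum]; exact Finset.sum_congr rfl fun j _ => by ring
  simp_rw [h1]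
  rw [two_mul]
  nth_rewrite 2 [hswap]
  rw [← Finset.sum_add_distrib, ← Finset.sum_neg_distrib]
  refine Finset.sum_congr rfl fun u _ => ?_
  rw [← Finset.sum_add_distrib, ← Finset.sum_neg_distrib]
  exact Finset.sum_congr rfl fun j _ => by ring

lemma sum_sq_deriv {N : ℕ} (a : Fin N → Fin N → ℝ) (ha_symm : ∀ i j, a i j = a j i)
    (x : Fin N → ℝ) :
    ∑ u, ∑ v, (2*(x u - x v)*((∑ j, a u j * (x j - x u)) - (∑ j, a v j * (x j - x v))))
      = -(2*(N:ℝ)) * ∑ u, ∑ v, a u v * (x u - x v)^2 := by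
  set d : Fin N → ℝ := fun u => ∑ j, a u j * (x j - x u) with hd
  have hd0 : ∑ v, d v = 0 := sum_d_zero a ha_symm x
  have hxd : 2 * (∑ u, x u * d u) = -(∑ u, ∑ j, a u j * (x u - x j)^2) :=
    sum_xd a ha_symm x
  set Sx : ℝ := ∑ v, x v with hSx
  set T : ℝ := ∑ v, x v * d v with hT
  have inner : ∀ u, ∑ v, 2*(x u - x v)*(d u - d v)
      = (N:ℝ) * (2 * (x u * d u)) - (2 * d u) * Sx + 2 * T := by
    intro u
    have e : ∀ v, 2*(x u - x v)*(d u - d v)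
        = 2*(x u * d u) - (2 * x u) * d v - (2 * d u) * x v + 2 * (x v * d v) := fun v => by ring
    simp_rw [e]
    rw [Finset.sum_add_distrib, Finset.sum_sub_distrib, Finset.sum_sub_distrib,
        Finset.sum_const, ← Finset.mul_sum, ← Finset.mul_sum, ← Finset.mul_sum, hd0,
        Finset.card_univ, Fintype.card_fin, nsmul_eq_mul]
    ring
  calc ∑ u, ∑ v, 2*(x u - x v)*(d u - d v)
      = ∑ u, ((N:ℝ) * (2 * (x u * d u)) - (2 * d u) * Sx + 2 * T) :=
        Finset.sum_congr rfl fun u _ => inner u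
    _ = (N:ℝ) * (2 * T) - (2 * (∑ u, d u)) * Sx + (N:ℝ) * (2 * T) := by
        rw [Finset.sum_add_distrib, Finset.sum_sub_distrib, ← Finset.sum_mul,
          Finset.sum_const, Finset.card_univ, Fintype.card_fin, nsmul_eq_mul]
        congr 1
        congr 1
        · rw [← Finset.mul_sum, ← Finset.mul_sum]
        · rw [← Finset.mul_sum]
    _ = -(2*(N:ℝ)) * ∑ u, ∑ v, a u v * (x u - x v)^2 := by
        rw [hd0, hxd]; ring

lemma finmax_le {N : ℕ} (hN : 0 < N) (f : Fin N → ℝ → ℝ) {a b : ℝ}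
    (hd : ∀ x ∈ Set.Icc a b, ∀ i, ∃ d, HasDerivAt (f i) d x ∧
      ((∀ j, f j x ≤ f i x) → d ≤ 0)) :
    ∀ x ∈ Set.Icc a b, ∀ i, f i x ≤ Finset.univ.sup' (Finset.univ_nonempty_iff.2 ⟨⟨0, hN⟩⟩) (fun j => f j a) := by
  have hne : (Finset.univ : Finset (Fin N)).Nonempty := Finset.univ_nonempty_iff.2 ⟨⟨0, hN⟩⟩
  set g : ℝ → ℝ := fun x => Finset.univ.sup' hne (fun j => f j x) with hgdef
  have hcont : ∀ i, ContinuousOn (f i) (Set.Icc a b) := by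
    intro i
    intro x hx
    obtain ⟨d, hdd, -⟩ := hd x hx i
    exact hdd.continuousAt.continuousWithinAt
  have hgcont : ContinuousOn g (Set.Icc a b) :=
    ContinuousOn.finset_sup'_apply hne (fun i _ => hcont i)
  have hg_le : ∀ x j, f j x ≤ g x := fun x j => Finset.le_sup' (fun k => f k x) (Finset.mem_univ j)
  have hle_g : ∀ x c, (∀ j, f j x ≤ c) → g x ≤ c := fun x c h => Finset.sup'_le _ _ fun k _ => h k
  have key : ∀ x ∈ Set.Icc a b, g x ≤ g a := by
    intro x hx
    refine image_le_of_liminf_slope_right_le_deriv_boundary (B := fun _ => g a) (B' := fun _ => 0)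
      hgcont le_rfl continuousOn_const (fun y _ => hasDerivWithinAt_const _ _ _) ?_ hx
    intro y hy r hr
    -- B' = 0? B = const g a, so B' y given as 0? we passed B' implicitly; need bound with B' y < r
    -- eventually version
    apply Filter.Eventually.frequently
    have hyIcc : y ∈ Set.Icc a b := ⟨hy.1, le_of_lt hy.2⟩
    have hall : ∀ᶠ z in 𝓝[>] y, ∀ j, (f j z - g y) / (z - y) < r := by
      rw [Filter.eventually_all]
      intro j
      obtain ⟨d, hdd, hdle⟩ := hd y hyIcc j
      by_cases hj : ∀ k, f k y ≤ f j y
      · have hdle := hdle hj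
        have hfy : f j y = g y := le_antisymm (hg_le y j) (hle_g y _ hj)
        have hslope : Tendsto (slope (f j) y) (𝓝[>] y) (𝓝 d) :=
          ((hasDerivAt_iff_tendsto_slope).1 hdd).mono_left
            (nhdsWithin_mono _ fun z hz => ne_of_gt hz)
        have : ∀ᶠ z in 𝓝[>] y, slope (f j) y z < r :=
          hslope.eventually_lt_const (lt_of_le_of_lt hdle hr)
        refine this.mono fun z hz => ?_
        rw [slope_def_field] at hz
        rwa [← hfy]
      · push_neg at hj
        obtain ⟨k, hk⟩ := hj
        have hlt : f j y < g y := lt_of_lt_of_le hk (hg_le y k)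
        have hev : ∀ᶠ z in 𝓝 y, f j z < g y :=
          hdd.continuousAt.eventually_lt_const hlt
        filter_upwards [hev.filter_mono nhdsWithin_le_nhds, self_mem_nhdsWithin] with z hz1 hz2
        have hzy : (0:ℝ) < z - y := sub_pos.2 hz2
        exact (div_neg_of_neg_of_pos (sub_neg.2 hz1) hzy).trans hr
    filter_upwards [hall, self_mem_nhdsWithin] with z hz hz2
    obtain ⟨j0, -, hj0⟩ := Finset.exists_mem_eq_sup' hne (fun k => f k z)
    have hgz : g z = f j0 z := hj0
    rw [slope_def_field, hgz]
    exact hz j0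
  intro x hx i
  exact le_trans (hg_le x i) (key x hx)

lemma invariance {N : ℕ} (a : Fin N → Fin N → ℝ) (θ : Fin N → ℝ → ℝ) (hN : 0 < N)
    (ha_nonneg : ∀ i j, 0 ≤ a i j)
    (hdyn : ∀ i : Fin N, ∀ t : ℝ, 0 ≤ t →
      HasDerivAt (θ i) (∑ j, a i j * wrap (θ j t - θ i t)) t)
    (hMm : (⨆ j, θ j 0) - (⨅ j, θ j 0) < π) :
    ∀ t, 0 ≤ t → ∀ i, θ i t ∈ Set.Icc (⨅ j, θ j 0) (⨆ j, θ j 0) := by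
  have hπ : (0:ℝ) < π := Real.pi_pos
  have hne : Nonempty (Fin N) := ⟨⟨0, hN⟩⟩
  set m0 := ⨅ j, θ j 0 with hm0def
  set M0 := ⨆ j, θ j 0 with hM0def
  have hm0 : ∀ i, m0 ≤ θ i 0 := fun i => ciInf_le (f := fun j => θ j 0) (Finite.bddBelow_range _) i
  have hM0 : ∀ i, θ i 0 ≤ M0 := fun i => le_ciSup (f := fun j => θ j 0) (Finite.bddAbove_range _) i
  have hcont : ∀ i, ∀ t : ℝ, 0 ≤ t → ContinuousAt (θ i) t :=
    fun i t ht => (hdyn i t ht).continuousAt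
  have hwrap : ∀ i j (t : ℝ), |θ j t - θ i t| < π →
      wrap (θ j t - θ i t) = θ j t - θ i t := by
    intro i j t h
    rw [abs_lt] at h
    exact wrap_eq_self (by linarith [h.1]) (le_of_lt h.2)
  by_contra hbad
  push_neg at hbad
  obtain ⟨T, hT0, iT, hiT⟩ := hbad
  set Bad : Set ℝ := {t | t ∈ Set.Icc 0 T ∧ ∃ i, θ i t ∉ Set.Icc m0 M0} with hBad
  have hBadne : Bad.Nonempty := ⟨T, ⟨hT0, le_refl T⟩, iT, hiT⟩
  have hBadbdd : BddBelow Bad := ⟨0, fun t ht => ht.1.1⟩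
  set t0 := sInf Bad with ht0def
  have ht00 : 0 ≤ t0 := le_csInf hBadne fun t ht => ht.1.1
  have ht0T : t0 ≤ T := csInf_le hBadbdd ⟨⟨hT0, le_refl T⟩, iT, hiT⟩
  have hgood_lt : ∀ s : ℝ, 0 ≤ s → s < t0 → ∀ i, θ i s ∈ Set.Icc m0 M0 := by
    intro s hs hst i
    by_contra hcon
    exact absurd (csInf_le hBadbdd ⟨⟨hs, le_trans (le_of_lt hst) ht0T⟩, i, hcon⟩)
      (not_le.2 hst)
  have hgood_t0 : ∀ i, θ i t0 ∈ Set.Icc m0 M0 := by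
    intro i
    rcases eq_or_lt_of_le ht00 with heq | hlt
    · rw [← heq]; exact ⟨hm0 i, hM0 i⟩
    · have htend : Tendsto (θ i) (𝓝[<] t0) (𝓝 (θ i t0)) :=
        ((hcont i t0 ht00).tendsto).mono_left nhdsWithin_le_nhds
      have hev : ∀ᶠ s in 𝓝[<] t0, θ i s ∈ Set.Icc m0 M0 := by
        filter_upwards [Ioo_mem_nhdsLT_of_mem (Set.mem_Ioc.2 ⟨hlt, le_refl t0⟩)] with s hs
        exact hgood_lt s hs.1.le hs.2 i
      constructor
      · exact ge_of_tendsto htend (hev.mono fun s hs => hs.1)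
      · exact le_of_tendsto htend (hev.mono fun s hs => hs.2)
  have hgood_le : ∀ s ∈ Set.Icc (0:ℝ) t0, ∀ i, θ i s ∈ Set.Icc m0 M0 := by
    intro s hs i
    rcases eq_or_lt_of_le hs.2 with heq | hlt
    · rw [heq]; exact hgood_t0 i
    · exact hgood_lt s hs.1 hlt i
  -- find δ
  have hUev : ∀ᶠ z in 𝓝 t0, ∀ i j, |θ i z - θ j z| < π := by
    rw [eventually_all]
    intro i
    rw [eventually_all]
    intro j
    have hc : ContinuousAt (fun z => |θ i z - θ j z|) t0 :=
      ((hcont i t0 ht00).sub (hcont j t0 ht00)).abs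
    have hval : |θ i t0 - θ j t0| < π := by
      have h1 := hgood_t0 i
      have h2 := hgood_t0 j
      rw [abs_lt]
      constructor <;> [linarith [h1.1, h2.2]; linarith [h1.2, h2.1]]
    exact hc.eventually_lt_const hval
  obtain ⟨δ, hδ0, hball⟩ := Metric.eventually_nhds_iff_ball.1 hUev
  set b' := min (t0 + δ/2) T with hb'
  have hb'0 : (0:ℝ) ≤ b' := le_min (by linarith) hT0
  have hdiff_small : ∀ x ∈ Set.Icc (0:ℝ) b', ∀ i j, |θ i x - θ j x| < π := by
    intro x hx i j
    rcases le_or_gt x t0 with h | h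
    · have h1 := hgood_le x ⟨hx.1, h⟩ i
      have h2 := hgood_le x ⟨hx.1, h⟩ j
      rw [abs_lt]
      constructor <;> [linarith [h1.1, h2.2]; linarith [h1.2, h2.1]]
    · apply hball
      rw [Metric.mem_ball, Real.dist_eq, abs_lt]
      have : x ≤ t0 + δ/2 := le_trans hx.2 (min_le_left _ _)
      constructor <;> linarith
  -- upper bound via finmax
  have hup : ∀ x ∈ Set.Icc (0:ℝ) b', ∀ i, θ i x ≤ M0 := by
    have h := finmax_le hN θ (a := 0) (b := b') ?_
    · intro x hx i
      exact le_trans (h x hx i) (Finset.sup'_le _ _ fun j _ => hM0 j)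
    · intro x hx i
      refine ⟨_, hdyn i x hx.1, fun hmax => ?_⟩
      apply Finset.sum_nonpos
      intro j _
      rw [hwrap i j x (hdiff_small x hx j i)]
      have := mul_le_mul_of_nonneg_left (sub_nonpos.2 (hmax j)) (ha_nonneg i j)
      simpa using this
  have hlow : ∀ x ∈ Set.Icc (0:ℝ) b', ∀ i, m0 ≤ θ i x := by
    have h := finmax_le hN (fun i t => -θ i t) (a := 0) (b := b') ?_
    · intro x hx i
      have h2 : -θ i x ≤ Finset.univ.sup' (Finset.univ_nonempty_iff.2 ⟨⟨0, hN⟩⟩)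
          (fun j => -θ j 0) := h x hx i
      have h3 : Finset.univ.sup' (Finset.univ_nonempty_iff.2 ⟨⟨0, hN⟩⟩)
          (fun j => -θ j 0) ≤ -m0 := Finset.sup'_le _ _ fun j _ => neg_le_neg (hm0 j)
      linarith
    · intro x hx i
      refine ⟨_, (hdyn i x hx.1).neg, fun hmax => ?_⟩
      rw [neg_nonpos]
      apply Finset.sum_nonneg
      intro j _
      rw [hwrap i j x (hdiff_small x hx j i)]
      have hθij : θ i x ≤ θ j x := by have := hmax j; simpa using this
      exact mul_nonneg (ha_nonneg i j) (by linarith)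
  -- contradiction
  obtain ⟨t1, ht1Bad, ht1lt⟩ := (csInf_lt_iff hBadbdd hBadne).1
    (show sInf Bad < t0 + δ/2 by rw [← ht0def]; linarith)
  obtain ⟨⟨ht10, ht1T⟩, i, hbadi⟩ := ht1Bad
  have ht1b' : t1 ≤ b' := le_min ht1lt.le ht1T
  exact hbadi ⟨hlow t1 ⟨ht10, ht1b'⟩ i, hup t1 ⟨ht10, ht1b'⟩ i⟩


/-- for the coupled oscillator dynamics on a connected undirected weighted
graph, if all initial phases lie in an open semicircle then `[min θ(0), max θ(0)]` is
positively invariant and the phases synchronize exponentially. -/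
theorem coupled_oscillators_sync
    (N : ℕ) (hN : 0 < N)
    (a : Fin N → Fin N → ℝ)
    (ha_nonneg : ∀ i j, 0 ≤ a i j)
    (ha_symm : ∀ i j, a i j = a j i)
    (hconn : ∀ u v : Fin N, Relation.ReflTransGen (fun i j => 0 < a i j) u v)
    (θ : Fin N → ℝ → ℝ)
    (hdyn : ∀ i : Fin N, ∀ t : ℝ, 0 ≤ t →
      HasDerivAt (θ i) (∑ j, a i j * wrap (θ j t - θ i t)) t)
    (hinit : ∃ γ : ℝ, ∀ i, θ i 0 ∈ Set.Ioo γ (γ + π)) :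
    (∀ i : Fin N, ∀ t : ℝ, 0 ≤ t →
        θ i t ∈ Set.Icc (⨅ j, θ j 0) (⨆ j, θ j 0)) ∧
    (∃ c > (0 : ℝ), ∃ lam > (0 : ℝ), ∀ t : ℝ, 0 ≤ t →
        ∀ i j : Fin N, |θ i t - θ j t| ≤ c * Real.exp (-lam * t)) := by
  have hπ : (0:ℝ) < π := Real.pi_pos
  have hne : Nonempty (Fin N) := ⟨⟨0, hN⟩⟩
  obtain ⟨γ, hγ⟩ := hinit
  have hMm : (⨆ j, θ j 0) - (⨅ j, θ j 0) < π := by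
    obtain ⟨i1, hi1⟩ := exists_eq_ciSup_of_finite (f := fun j => θ j 0)
    obtain ⟨i0, hi0⟩ := exists_eq_ciInf_of_finite (f := fun j => θ j 0)
    have h1 := (hγ i1).2
    have h0 := (hγ i0).1
    rw [← hi1, ← hi0]
    linarith
  have Inv := invariance a θ hN ha_nonneg hdyn hMm
  refine ⟨fun i t ht => Inv t ht i, ?_⟩
  -- derivative without wrap
  have hwrap : ∀ i j (t : ℝ), 0 ≤ t → wrap (θ j t - θ i t) = θ j t - θ i t := by
    intro i j t ht
    have h1 := Inv t ht i
    have h2 := Inv t ht j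
    refine wrap_eq_self (by linarith [h1.2, h2.1]) (by linarith [h1.1, h2.2])
  have hθ' : ∀ i (t : ℝ), 0 ≤ t →
      HasDerivAt (θ i) (∑ j, a i j * (θ j t - θ i t)) t := by
    intro i t ht
    have h := hdyn i t ht
    have he : (∑ j, a i j * wrap (θ j t - θ i t)) = ∑ j, a i j * (θ j t - θ i t) :=
      Finset.sum_congr rfl fun j _ => by rw [hwrap i j t ht]
    rwa [he] at h
  by_cases h2N : 2 ≤ N
  case neg =>
    -- N = 1
    have hN1 : N = 1 := by omega
    refine ⟨1, one_pos, 1, one_pos, fun t ht i j => ?_⟩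
    have hij : i = j := by subst hN1; exact Subsingleton.elim i j
    rw [hij, sub_self, abs_zero]
    positivity
  case pos =>
  -- edge exists
  have hedge : ∃ i j, 0 < a i j := by
    have h01 : (⟨0, by omega⟩ : Fin N) ≠ ⟨1, by omega⟩ := by simp [Fin.ext_iff]
    rcases (hconn ⟨0, by omega⟩ ⟨1, by omega⟩).cases_head with heq | ⟨w, hw, -⟩
    · exact absurd heq h01
    · exact ⟨_, _, hw⟩
  classical
  obtain ⟨i0, j0, h0⟩ := hedge
  have hmem : ∀ i j, 0 < a i j → ((i, j) : Fin N × Fin N) ∈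
      Finset.univ.filter (fun p : Fin N × Fin N => 0 < a p.1 p.2) :=
    fun i j h => Finset.mem_filter.2 ⟨Finset.mem_univ _, h⟩
  have hEpne : (Finset.univ.filter (fun p : Fin N × Fin N => 0 < a p.1 p.2)).Nonempty :=
    ⟨(i0, j0), hmem _ _ h0⟩
  obtain ⟨ε, hε0, hεle⟩ : ∃ ε : ℝ, 0 < ε ∧ ∀ i j, 0 < a i j → ε ≤ a i j := by
    refine ⟨(Finset.univ.filter (fun p : Fin N × Fin N => 0 < a p.1 p.2)).inf' hEpne
      (fun p => a p.1 p.2), ?_, ?_⟩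
    · exact (Finset.lt_inf'_iff hEpne).2 fun p hp => (Finset.mem_filter.1 hp).2
    · exact fun i j h => Finset.inf'_le _ (hmem i j h)
  choose n hn using fun u v => path_bound a (hconn u v)
  set S := ∑ u, ∑ v, ((n u v : ℝ))^2 with hSdef
  have hS0 : 0 ≤ S := Finset.sum_nonneg fun u _ => Finset.sum_nonneg fun v _ => sq_nonneg _
  set κ := ε / (S + 1) with hκdef
  have hκ0 : 0 < κ := div_pos hε0 (by linarith)
  set Efun : (Fin N → ℝ) → ℝ := fun x => ∑ u, ∑ v, a u v * (x u - x v)^2 with hEfun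
  set Vfun : (Fin N → ℝ) → ℝ := fun x => ∑ u, ∑ v, (x u - x v)^2 with hVfun
  have hE0 : ∀ x, 0 ≤ Efun x := fun x => Finset.sum_nonneg fun u _ =>
    Finset.sum_nonneg fun v _ => mul_nonneg (ha_nonneg u v) (sq_nonneg _)
  have hV0 : ∀ x, 0 ≤ Vfun x := fun x => Finset.sum_nonneg fun u _ =>
    Finset.sum_nonneg fun v _ => sq_nonneg _
  have hterm : ∀ (x : Fin N → ℝ) u v, (x u - x v)^2 ≤ Vfun x := by
    intro x u v
    calc (x u - x v)^2 ≤ ∑ v', (x u - x v')^2 :=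
          Finset.single_le_sum (f := fun v' => (x u - x v')^2)
            (fun k _ => sq_nonneg _) (Finset.mem_univ v)
      _ ≤ Vfun x := Finset.single_le_sum
          (f := fun u' => ∑ v', (x u' - x v')^2)
          (fun k _ => Finset.sum_nonneg fun v' _ => sq_nonneg _) (Finset.mem_univ u)
  have hterm' : ∀ (x : Fin N → ℝ) u v, a u v * (x u - x v)^2 ≤ Efun x := by
    intro x u v
    calc a u v * (x u - x v)^2 ≤ ∑ v', a u v' * (x u - x v')^2 :=
          Finset.single_le_sum (f := fun v' => a u v' * (x u - x v')^2)
            (fun k _ => mul_nonneg (ha_nonneg u k) (sq_nonneg _)) (Finset.mem_univ v)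
      _ ≤ Efun x := Finset.single_le_sum
          (f := fun u' => ∑ v', a u' v' * (x u' - x v')^2)
          (fun k _ => Finset.sum_nonneg fun v' _ =>
            mul_nonneg (ha_nonneg k v') (sq_nonneg _)) (Finset.mem_univ u)
  have hkey : ∀ x, κ * Vfun x ≤ Efun x := by
    intro x
    set s := Real.sqrt (Efun x / ε) with hsdef
    have hs0 : 0 ≤ s := Real.sqrt_nonneg _
    have hstep : ∀ i j, 0 < a i j → |x i - x j| ≤ s := by
      intro i j hij
      have h1 : ε * (x i - x j)^2 ≤ Efun x :=
        le_trans (mul_le_mul_of_nonneg_right (hεle i j hij) (sq_nonneg _)) (hterm' x i j)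
      have h2 : (x i - x j)^2 ≤ Efun x / ε := (le_div_iff₀' hε0).2 h1
      calc |x i - x j| = Real.sqrt ((x i - x j)^2) := (Real.sqrt_sq_eq_abs _).symm
        _ ≤ s := Real.sqrt_le_sqrt h2
    have hpair : ∀ u v, (x u - x v)^2 ≤ ((n u v : ℝ))^2 * (Efun x / ε) := by
      intro u v
      have h3 : |x u - x v| ≤ (n u v : ℝ) * s := hn u v x s hs0 hstep
      calc (x u - x v)^2 = |x u - x v|^2 := (sq_abs _).symm
        _ ≤ ((n u v : ℝ) * s)^2 := by
            apply pow_le_pow_left₀ (abs_nonneg _) h3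
        _ = ((n u v : ℝ))^2 * s^2 := by ring
        _ = ((n u v : ℝ))^2 * (Efun x / ε) := by
            rw [hsdef, Real.sq_sqrt (div_nonneg (hE0 x) hε0.le)]
    have hVS : Vfun x ≤ S * (Efun x / ε) := by
      have h4 : Vfun x ≤ ∑ u, ∑ v, ((n u v : ℝ))^2 * (Efun x / ε) :=
        Finset.sum_le_sum fun u _ => Finset.sum_le_sum fun v _ => hpair u v
      have h5 : ∑ u, ∑ v, ((n u v : ℝ))^2 * (Efun x / ε) = S * (Efun x / ε) := by
        rw [hSdef, Finset.sum_mul]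
        exact Finset.sum_congr rfl fun u _ => by rw [Finset.sum_mul]
      linarith
    calc κ * Vfun x ≤ κ * (S * (Efun x / ε)) :=
          mul_le_mul_of_nonneg_left hVS hκ0.le
      _ = (S / (S + 1)) * Efun x := by
          rw [hκdef]; field_simp
      _ ≤ 1 * Efun x := by
          apply mul_le_mul_of_nonneg_right _ (hE0 x)
          rw [div_le_one (by linarith)]
          linarith
      _ = Efun x := one_mul _
  -- time-dependent quantities
  set Vt : ℝ → ℝ := fun t => ∑ u, ∑ v, (θ u t - θ v t)^2 with hVtdef
  have hVt' : ∀ t : ℝ, 0 ≤ t →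
      HasDerivAt Vt (-(2*(N:ℝ)) * Efun (fun i => θ i t)) t := by
    intro t ht
    have hder : HasDerivAt Vt (∑ u, ∑ v, (2*(θ u t - θ v t)*
        ((∑ j, a u j * (θ j t - θ u t)) - (∑ j, a v j * (θ j t - θ v t))))) t := by
      apply HasDerivAt.fun_sum
      intro u _
      apply HasDerivAt.fun_sum
      intro v _
      have h3 := ((hθ' u t ht).sub (hθ' v t ht)).pow 2
      exact h3.congr_deriv (by simp only [Pi.sub_apply]; push_cast; ring)
    have hid := sum_sq_deriv a ha_symm (fun i => θ i t)
    rw [hid] at hder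
    exact hder
  set lam := (N:ℝ) * κ with hlamdef
  have hNpos : (0:ℝ) < N := by exact_mod_cast hN
  have hlam0 : 0 < lam := mul_pos hNpos hκ0
  set W : ℝ → ℝ := fun t => Vt t * Real.exp (2 * lam * t) with hWdef
  have hexp' : ∀ t : ℝ, HasDerivAt (fun t => Real.exp (2*lam*t))
      (2 * lam * Real.exp (2*lam*t)) t := by
    intro t
    have h1 : HasDerivAt (fun t : ℝ => 2*lam*t) (2*lam) t := by
      simpa using (hasDerivAt_id t).const_mul (2*lam)
    have := (Real.hasDerivAt_exp (2*lam*t)).comp t h1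
    rw [show 2 * lam * Real.exp (2*lam*t) = Real.exp (2*lam*t) * (2*lam) by ring]
    exact this
  have hW' : ∀ t : ℝ, 0 ≤ t → HasDerivAt W
      ((-(2*(N:ℝ)) * Efun (fun i => θ i t)) * Real.exp (2*lam*t)
        + Vt t * (2 * lam * Real.exp (2*lam*t))) t :=
    fun t ht => (hVt' t ht).mul (hexp' t)
  have hWanti : AntitoneOn W (Set.Ici 0) := by
    apply antitoneOn_of_deriv_nonpos (convex_Ici 0)
    · exact fun t ht => ((hW' t ht).continuousAt).continuousWithinAt
    · rw [interior_Ici]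
      exact fun t ht => ((hW' t (le_of_lt ht)).differentiableAt).differentiableWithinAt
    · intro t ht
      rw [interior_Ici] at ht
      rw [(hW' t ht.le).deriv]
      have hk : κ * Vt t ≤ Efun (fun i => θ i t) := hkey (fun i => θ i t)
      have he : (0:ℝ) < Real.exp (2*lam*t) := Real.exp_pos _
      have h5 : κ * Vt t * Real.exp (2*lam*t) ≤ Efun (fun i => θ i t) * Real.exp (2*lam*t) :=
        mul_le_mul_of_nonneg_right hk he.le
      rw [hlamdef]
      nlinarith [hNpos]
  have hdecay : ∀ t : ℝ, 0 ≤ t → Vt t ≤ Vt 0 * Real.exp (-(2*lam) * t) := by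
    intro t ht
    have h6 : W t ≤ W 0 := hWanti (Set.self_mem_Ici) ht ht
    have h7 : W 0 = Vt 0 := by rw [hWdef]; simp
    have he : (0:ℝ) < Real.exp (2*lam*t) := Real.exp_pos _
    rw [h7] at h6
    rw [hWdef] at h6
    have h8 : Vt t ≤ Vt 0 / Real.exp (2*lam*t) := (le_div_iff₀ he).2 h6
    have h9 : Vt 0 / Real.exp (2*lam*t) = Vt 0 * Real.exp (-(2*lam)*t) := by
      rw [div_eq_mul_inv, ← Real.exp_neg]
      ring_nf
    linarith
  have hVt0 : (0:ℝ) ≤ Vt 0 :=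
    Finset.sum_nonneg fun u _ => Finset.sum_nonneg fun v _ => sq_nonneg _
  refine ⟨Real.sqrt (Vt 0) + 1, by positivity, lam, hlam0, ?_⟩
  intro t ht i j
  have h10 : (θ i t - θ j t)^2 ≤ Vt t := hterm (fun k => θ k t) i j
  have h11 := hdecay t ht
  calc |θ i t - θ j t| = Real.sqrt ((θ i t - θ j t)^2) := (Real.sqrt_sq_eq_abs _).symm
    _ ≤ Real.sqrt (Vt 0 * Real.exp (-(2*lam)*t)) := Real.sqrt_le_sqrt (h10.trans h11)
    _ = Real.sqrt (Vt 0) * Real.sqrt (Real.exp (-(2*lam)*t)) :=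
        Real.sqrt_mul hVt0 _
    _ = Real.sqrt (Vt 0) * Real.exp (-lam*t) := by
        rw [show -(2*lam)*t = (-lam*t) + (-lam*t) by ring, Real.exp_add,
          Real.sqrt_mul_self (Real.exp_nonneg _)]
    _ ≤ (Real.sqrt (Vt 0) + 1) * Real.exp (-lam*t) := by
        have := Real.exp_nonneg (-lam*t)
        nlinarith [Real.sqrt_nonneg (Vt 0)]
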